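/- For a one-hidden-layer ReLU network as above, if x satisfies oⱼ·(Wⱼᵀx + bⱼ) > 0 for all j (strict activation pattern) with all Wⱼ ≠ 0, then the open Euclidean ball around x of radius min_j |Wⱼᵀx + bⱼ|/‖Wⱼ‖₂ is contained in S = {x̄ : oⱼ(Wⱼᵀx̄ + bⱼ) ≥ 0 ∀j}, and hence the network is affine on this ball. -/
import Mathlib


open scoped RealInnerProductSpace

/-- Strict activation pattern: the open ℓ2 ball of radius
`min_j |⟪W j, x⟫ + b j| / ‖W j‖` around `x` lies in the feasible set of the
pattern, and the one-hidden-layer ReLU network is affine on this ball. -/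
theorem stmt16 {D N : ℕ} (hN : 0 < N)
    (W : Fin N → EuclideanSpace ℝ (Fin D)) (b : Fin N → ℝ)
    (V : Fin N → ℝ) (d : ℝ)
    (o : Fin N → ℝ) (ho : ∀ j, o j = 1 ∨ o j = -1)
    (x : EuclideanSpace ℝ (Fin D))
    (hstrict : ∀ j, 0 < o j * (⟪W j, x⟫ + b j)) (hW : ∀ j, W j ≠ 0) :
    Metric.ball x (Finset.univ.inf'
        (Finset.univ_nonempty_iff.mpr (Fin.pos_iff_nonempty.mp hN))
        (fun j => |⟪W j, x⟫ + b j| / ‖W j‖))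
      ⊆ {x' | ∀ j, 0 ≤ o j * (⟪W j, x'⟫ + b j)} ∧
    ∀ x' ∈ Metric.ball x (Finset.univ.inf'
        (Finset.univ_nonempty_iff.mpr (Fin.pos_iff_nonempty.mp hN))
        (fun j => |⟪W j, x⟫ + b j| / ‖W j‖)),
      (∑ j, V j * max 0 (⟪W j, x'⟫ + b j)) + d
        = (∑ j, if o j = 1 then V j * (⟪W j, x'⟫ + b j) else 0) + d := by
  have key : ∀ x' ∈ Metric.ball x (Finset.univ.inf'
        (Finset.univ_nonempty_iff.mpr (Fin.pos_iff_nonempty.mp hN))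
        (fun j => |⟪W j, x⟫ + b j| / ‖W j‖)),
      ∀ j, 0 < o j * (⟪W j, x'⟫ + b j) := by
    intro x' hx' j
    have hWj : (0:ℝ) < ‖W j‖ := norm_pos_iff.mpr (hW j)
    have hd : dist x' x < |⟪W j, x⟫ + b j| / ‖W j‖ :=
      lt_of_lt_of_le (Metric.mem_ball.mp hx')
        (Finset.inf'_le _ (Finset.mem_univ j))
    have hdiff : |⟪W j, x'⟫ - ⟪W j, x⟫| < |⟪W j, x⟫ + b j| := by
      have : |⟪W j, x' - x⟫| ≤ ‖W j‖ * ‖x' - x‖ := abs_real_inner_le_norm _ _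
      have h2 : ‖W j‖ * ‖x' - x‖ < |⟪W j, x⟫ + b j| := by
        have := (mul_lt_mul_iff_right₀ hWj).mpr hd
        rwa [mul_div_cancel₀ _ (ne_of_gt hWj), dist_eq_norm] at this
      calc |⟪W j, x'⟫ - ⟪W j, x⟫| = |⟪W j, x' - x⟫| := by rw [inner_sub_right]
        _ < |⟪W j, x⟫ + b j| := lt_of_le_of_lt this h2
    have hsj := hstrict j
    rcases ho j with h1 | h1 <;> rw [h1] <;> rw [h1] at hsj
    · have hz : 0 < ⟪W j, x⟫ + b j := by linarith
      have := abs_lt.mp hdiff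
      rw [abs_of_pos hz] at this
      have : 0 < ⟪W j, x'⟫ + b j := by linarith [this.1]
      linarith
    · have hz : ⟪W j, x⟫ + b j < 0 := by nlinarith
      have habs := abs_lt.mp hdiff
      rw [abs_of_neg hz] at habs
      have : ⟪W j, x'⟫ + b j < 0 := by linarith [habs.2]
      nlinarith
  constructor
  · intro x' hx' j
    exact le_of_lt (key x' hx' j)
  · intro x' hx'
    congr 1
    apply Finset.sum_congr rfl
    intro j _
    rcases ho j with h1 | h1
    · rw [if_pos h1]
      have := key x' hx' j
      rw [h1, one_mul] at this
      rw [max_eq_right (le_of_lt this)]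
    · rw [if_neg (by rw [h1]; norm_num)]
      have := key x' hx' j
      rw [h1] at this
      have : ⟪W j, x'⟫ + b j < 0 := by nlinarith
      rw [max_eq_left (le_of_lt this)]
      ring
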